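/- If G is a triangle-free graph with minimum degree at least 3, then the dual general position number of G is 0, i.e., the only dual general position set of G is the empty set. -/
import Mathlib


open SimpleGraph

/-- Two vertices `u` and `v` are `S`-visible: there exists a shortest `u,v`-path
whose intersection with `S` is contained in `{u, v}`. -/
def isVisible {V : Type*} (G : SimpleGraph V) (S : Set V) (u v : V) : Prop :=
  ∃ p : G.Walk u v, p.IsPath ∧ p.length = G.dist u v ∧
    ∀ w ∈ p.support, w ∈ S → w = u ∨ w = v

/-- Two vertices `u` and `v` are `S`-positionable: every shortest `u,v`-path
has its intersection with `S` contained in `{u, v}`. -/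
def isPositionable {V : Type*} (G : SimpleGraph V) (S : Set V) (u v : V) : Prop :=
  ∀ p : G.Walk u v, p.IsPath → p.length = G.dist u v →
    ∀ w ∈ p.support, w ∈ S → w = u ∨ w = v

def isMVSet {V : Type*} (G : SimpleGraph V) (S : Set V) : Prop :=
  ∀ u ∈ S, ∀ v ∈ S, isVisible G S u v

def isOuterMVSet {V : Type*} (G : SimpleGraph V) (S : Set V) : Prop :=
  isMVSet G S ∧ ∀ u ∈ S, ∀ v ∉ S, isVisible G S u v

def isDualMVSet {V : Type*} (G : SimpleGraph V) (S : Set V) : Prop :=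
  isMVSet G S ∧ ∀ u ∉ S, ∀ v ∉ S, isVisible G S u v

def isTotalMVSet {V : Type*} (G : SimpleGraph V) (S : Set V) : Prop :=
  ∀ u v : V, isVisible G S u v

def isGPSet {V : Type*} (G : SimpleGraph V) (S : Set V) : Prop :=
  ∀ u ∈ S, ∀ v ∈ S, isPositionable G S u v

def isOuterGPSet {V : Type*} (G : SimpleGraph V) (S : Set V) : Prop :=
  isGPSet G S ∧ ∀ u ∈ S, ∀ v ∉ S, isPositionable G S u v

def isDualGPSet {V : Type*} (G : SimpleGraph V) (S : Set V) : Prop :=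
  isGPSet G S ∧ ∀ u ∉ S, ∀ v ∉ S, isPositionable G S u v

def isTotalGPSet {V : Type*} (G : SimpleGraph V) (S : Set V) : Prop :=
  ∀ u v : V, isPositionable G S u v

/-- Vertices of the generalized glued `t`-ary tree obtained from `n` copies of
the perfect `t`-ary tree of depth `r`: an internal vertex of copy `i` is encoded
as the list of child-choices from the root (length `< r`), and a quasi-leaf
(identified leaf) is encoded as such a list of length exactly `r`. -/
abbrev gluedVert (r n t : ℕ) : Type :=
  (Fin n × {l : List (Fin t) // l.length < r}) ⊕ {l : List (Fin t) // l.length = r}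

def gluedAdj (r n t : ℕ) : gluedVert r n t → gluedVert r n t → Prop
  | Sum.inl (i, s), Sum.inl (j, s') => i = j ∧ ∃ b, s'.val = s.val ++ [b]
  | Sum.inl (_, s), Sum.inr l => ∃ b, l.val = s.val ++ [b]
  | Sum.inr _, _ => False

/-- The generalized glued `t`-ary tree on `n` copies of the perfect `t`-ary tree
of depth `r`.  `gluedTree r 2 2` is the glued binary tree `GT(r)`,
`gluedTree r 2 t` is the glued `t`-ary tree `GT(r,t)`, and `gluedTree r n 2`
is the generalized glued binary tree `GT_r^(n)`. -/
def gluedTree (r n t : ℕ) : SimpleGraph (gluedVert r n t) :=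
  SimpleGraph.fromRel (gluedAdj r n t)

/-- The set of quasi-leaves. -/
def quasiLeaves (r n t : ℕ) : Set (gluedVert r n t) := {x | ∃ l, x = Sum.inr l}

/-- The vertex set of the `i`-th copy `T_r^(i)` of the perfect `t`-ary tree
(its internal vertices together with all quasi-leaves). -/
def copySet (r n t : ℕ) (i : Fin n) : Set (gluedVert r n t) :=
  {x | (∃ s, x = Sum.inl (i, s)) ∨ x ∈ quasiLeaves r n t}

lemma key_aux {V : Type*} (G : SimpleGraph V) (htf : G.CliqueFree 3)
    {x u v : V} (hux : G.Adj u x) (hxv : G.Adj x v) (huv : u ≠ v)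
    (S : Set V) (hx : x ∈ S) (hpos : isPositionable G S u v) : False := by
  classical
  have hnadj : ¬ G.Adj u v := fun h => htf {x, u, v}
    (SimpleGraph.is3Clique_triple_iff.2 ⟨hux.symm, hxv, h⟩)
  set p : G.Walk u v := Walk.cons hux (Walk.cons hxv Walk.nil) with hp
  have hsupp : p.support = [u, x, v] := rfl
  have hlen : p.length = 2 := rfl
  have hpath : p.IsPath := by
    rw [Walk.isPath_def, hsupp]
    simp [List.nodup_cons, hux.ne, huv, hxv.ne]
  have hdist : G.dist u v = 2 := by
    have h1 : G.dist u v ≤ 2 := hlen ▸ SimpleGraph.dist_le p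
    have h2 : 0 < G.dist u v := (p.reachable).pos_dist_of_ne huv
    have h3 : G.dist u v ≠ 1 := fun h => hnadj (SimpleGraph.dist_eq_one_iff_adj.mp h)
    omega
  have := hpos p hpath (hlen.trans hdist.symm) x (by rw [hsupp]; simp) hx
  rcases this with h | h
  · exact hux.ne' h
  · exact hxv.ne h

theorem stmt1 {V : Type*} (G : SimpleGraph V) (htf : G.CliqueFree 3)
    (hdeg : ∀ v : V, 3 ≤ (G.neighborSet v).ncard) :
    ∀ S : Set V, isDualGPSet G S → S = ∅ := by
  intro S hS
  by_contra hne
  obtain ⟨x, hx⟩ := Set.nonempty_iff_ne_empty.mpr hne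
  set N := G.neighborSet x with hN
  have hfin : N.Finite := Set.finite_of_ncard_pos (lt_of_lt_of_le (by norm_num) (hdeg x))
  have hsplit : (N ∩ S).ncard + (N \ S).ncard = N.ncard :=
    Set.ncard_inter_add_ncard_diff_eq_ncard N S hfin
  have h3 : 3 ≤ N.ncard := hdeg x
  have : 1 < (N ∩ S).ncard ∨ 1 < (N \ S).ncard := by omega
  rcases this with h | h
  · obtain ⟨u, v, hu, hv, huv⟩ :=
      (Set.one_lt_ncard_iff (hfin.subset Set.inter_subset_left)).mp h
    exact key_aux G htf hu.1.symm hv.1 huv S hx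
      (hS.1 u hu.2 v hv.2)
  · obtain ⟨u, v, hu, hv, huv⟩ :=
      (Set.one_lt_ncard_iff (hfin.subset Set.diff_subset)).mp h
    exact key_aux G htf hu.1.symm hv.1 huv S hx
      (hS.2 u hu.2 v hv.2)
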